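/- Let φ₁, φ₂ generate closed shift-invariant subspaces V(φ_i) = {Σ_n c[n]φ_i(·−nh) : c ∈ ℓ²} of L², and suppose the cross-correlation filter A₁₂(z) = Σ_n ⟨φ₁(·−nh), φ₂⟩ z^{−n} has no zeros on the unit circle. Then for any x ∈ V(φ₂), writing c₁[n] = ⟨x, φ₁(·−nh)⟩ and k the inverse Z-transform of A₁₂(z)^{−1}, one has x(t) = Σ_n (c₁ ∗ k)[n] φ₂(t−nh). -/

import Mathlib

open MeasureTheory Real

open Filter Topology
open scoped ENNReal NNReal


private lemma memLp_shift {φ : ℝ → ℝ} (hφ : MemLp φ 2 (volume : Measure ℝ)) (s : ℝ) :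
    MemLp (fun t => φ (t - s)) 2 (volume : Measure ℝ) :=
  hφ.comp_measurePreserving (measurePreserving_sub_right volume s)

private lemma integrable_mul_of_memLp2 {f g : ℝ → ℝ} (hf : MemLp f 2 (volume : Measure ℝ))
    (hg : MemLp g 2 (volume : Measure ℝ)) :
    Integrable (fun t => f t * g t) (volume : Measure ℝ) := by
  have h1 : MemLp (fun t => f t * g t) 1 (volume : Measure ℝ) := by
    have := hg.smul (φ := f) hf (r := 1)
    exact this
  exact memLp_one_iff_integrable.mp h1

private lemma summable_abs_mul {u v : ℤ → ℝ} (hu : Summable fun n => u n ^ 2)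
    (hv : Summable fun n => v n ^ 2) : Summable fun n => |u n * v n| :=
  Summable.of_nonneg_of_le (fun n => abs_nonneg _)
    (fun n => by
      rw [abs_mul]
      nlinarith [sq_abs (u n), sq_abs (v n), sq_nonneg (|u n| - |v n|),
        abs_nonneg (u n), abs_nonneg (v n)])
    ((hu.add hv).div_const 2)

private lemma cauchy_schwarz_integral {f g : ℝ → ℝ} (hf : MemLp f 2 (volume : Measure ℝ))
    (hg : MemLp g 2 (volume : Measure ℝ)) :
    |∫ t, f t * g t| ≤ Real.sqrt (∫ t, f t ^ 2) * Real.sqrt (∫ t, g t ^ 2) := by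
  have habs : |∫ t, f t * g t| ≤ ∫ t, |f t| * |g t| := by
    calc |∫ t, f t * g t| = ‖∫ t, f t * g t‖ := (Real.norm_eq_abs _).symm
    _ ≤ ∫ t, ‖f t * g t‖ := norm_integral_le_integral_norm _
    _ = ∫ t, |f t| * |g t| := by simp [Real.norm_eq_abs, abs_mul]
  have hpq : (2:ℝ).HolderConjugate 2 := by constructor <;> norm_num
  have hf' : MemLp (fun t => |f t|) (ENNReal.ofReal 2) (volume : Measure ℝ) := by
    rw [show ENNReal.ofReal 2 = 2 by norm_num]
    simpa [Real.norm_eq_abs] using hf.norm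
  have hg' : MemLp (fun t => |g t|) (ENNReal.ofReal 2) (volume : Measure ℝ) := by
    rw [show ENNReal.ofReal 2 = 2 by norm_num]
    simpa [Real.norm_eq_abs] using hg.norm
  have h2 := integral_mul_le_Lp_mul_Lq_of_nonneg hpq (ae_of_all _ fun t => abs_nonneg (f t))
      (ae_of_all _ fun t => abs_nonneg (g t)) hf' hg'
  have hpow : ∀ (u : ℝ → ℝ), (∫ t, |u t| ^ (2:ℝ)) = ∫ t, u t ^ 2 := by
    intro u
    congr 1; ext t
    rw [show ((2:ℝ)) = ((2:ℕ):ℝ) by norm_num, Real.rpow_natCast, sq_abs]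
  rw [hpow f, hpow g] at h2
  rw [Real.sqrt_eq_rpow, Real.sqrt_eq_rpow]
  exact habs.trans h2


private lemma riesz_upper {φ : ℝ → ℝ} {h B : ℝ} (c : ℤ → ℝ)
    (hB : ∀ d : ℤ →₀ ℝ,
      (∫ t : ℝ, (∑ n ∈ d.support, d n * φ (t - n * h)) ^ 2) ≤ B * ∑ n ∈ d.support, (d n) ^ 2)
    (F : Finset ℤ) :
    (∫ t : ℝ, (∑ n ∈ F, c n * φ (t - n * h)) ^ 2) ≤ B * ∑ n ∈ F, (c n) ^ 2 := by
  classical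
  set d : ℤ →₀ ℝ := Finsupp.onFinset F (fun n => if n ∈ F then c n else 0)
    (fun n hn => by by_contra h'; simp [h'] at hn) with hd
  have hsupp : d.support ⊆ F := Finsupp.support_onFinset_subset
  have hdF : ∀ n ∈ F, d n = c n := fun n hn => by simp [hd, Finsupp.onFinset_apply, hn]
  have h1 : ∀ t : ℝ, ∑ n ∈ d.support, d n * φ (t - n * h) = ∑ n ∈ F, c n * φ (t - n * h) := by
    intro t
    rw [Finset.sum_subset hsupp (fun n _ hn => by
      rw [Finsupp.notMem_support_iff.mp hn, zero_mul])]
    exact Finset.sum_congr rfl fun n hn => by rw [hdF n hn]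
  have h2 : ∑ n ∈ d.support, (d n) ^ 2 = ∑ n ∈ F, (c n) ^ 2 := by
    rw [Finset.sum_subset hsupp (fun n _ hn => by
      rw [Finsupp.notMem_support_iff.mp hn]; ring)]
    exact Finset.sum_congr rfl fun n hn => by rw [hdF n hn]
  calc (∫ t : ℝ, (∑ n ∈ F, c n * φ (t - n * h)) ^ 2)
      = ∫ t : ℝ, (∑ n ∈ d.support, d n * φ (t - n * h)) ^ 2 := by
        congr 1; ext t; rw [h1 t]
    _ ≤ B * ∑ n ∈ d.support, (d n) ^ 2 := hB d
    _ = B * ∑ n ∈ F, (c n) ^ 2 := by rw [h2]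

private lemma cross_integral {φ₁ φ₂ : ℝ → ℝ} (h : ℝ) (a : ℤ → ℝ)
    (ha : ∀ n : ℤ, a n = ∫ t : ℝ, φ₁ (t - n * h) * φ₂ t) (j m : ℤ) :
    (∫ t : ℝ, φ₂ (t - j * h) * φ₁ (t - m * h)) = a (m - j) := by
  have key : (fun t : ℝ => φ₂ (t - j * h) * φ₁ (t - m * h))
      = fun t : ℝ => (fun u : ℝ => φ₂ u * φ₁ (u - ((m - j : ℤ) : ℝ) * h)) (t - j * h) := by
    ext t
    have harg : t - (m : ℝ) * h = (t - (j : ℝ) * h) - ((m - j : ℤ) : ℝ) * h := by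
      push_cast; ring
    simp only [harg]
  rw [key, integral_sub_right_eq_self (fun u : ℝ => φ₂ u * φ₁ (u - ((m - j : ℤ) : ℝ) * h)) ((j : ℝ) * h)]
  rw [ha (m - j)]
  congr 1; ext u; ring


/-- **Generalized sampling theorem (Unser–Aldroubi).**
`φ₁, φ₂ ∈ L²(ℝ)` generate shift-invariant spaces (their `h`-shifts being Riesz
systems).  If the cross-correlation filter `A₁₂(z) = Σ_n a_n z^{-n}`,
`a_n = ⟨φ₁(·−nh), φ₂⟩`, has no zeros on the unit circle, with (convolution)
inverse filter `k`, then any `x ∈ V(φ₂)` is reconstructed from the generalized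
samples `c₁[n] = ⟨x, φ₁(·−nh)⟩` as `x(t) = Σ_n (c₁ ∗ k)[n] φ₂(t−nh)`. -/
theorem generalized_sampling_theorem (h : ℝ) (hh : 0 < h)
    (φ₁ φ₂ : ℝ → ℝ)
    (hφ₁ : MemLp φ₁ 2 (volume : Measure ℝ))
    (hφ₂ : MemLp φ₂ 2 (volume : Measure ℝ))
    -- the h-shifts of φ₁ and φ₂ are Riesz systems:
    (hRiesz : ∃ A B : ℝ, 0 < A ∧ 0 < B ∧ ∀ φ ∈ ({φ₁, φ₂} : Set (ℝ → ℝ)),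
      ∀ d : ℤ →₀ ℝ,
        A * ∑ n ∈ d.support, (d n) ^ 2 ≤
            (∫ t : ℝ, (∑ n ∈ d.support, d n * φ (t - n * h)) ^ 2) ∧
        (∫ t : ℝ, (∑ n ∈ d.support, d n * φ (t - n * h)) ^ 2) ≤
            B * ∑ n ∈ d.support, (d n) ^ 2)
    (a : ℤ → ℝ) (ha : ∀ n : ℤ, a n = ∫ t : ℝ, φ₁ (t - n * h) * φ₂ t)
    -- A₁₂(z) has no zeros on the unit circle:
    (haSummable : Summable fun n : ℤ => |a n|)
    (hinv : ∀ θ : ℝ,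
      (∑' n : ℤ, (a n : ℂ) * Complex.exp (-(n * θ) * Complex.I)) ≠ 0)
    -- k is the impulse response of K(z) = A₁₂(z)⁻¹:
    (k : ℤ → ℝ) (hkSummable : Summable fun n : ℤ => |k n|)
    (hk : ∀ n : ℤ,
      HasSum (fun m : ℤ => k m * a (n - m)) (if n = 0 then 1 else 0))
    -- x ∈ V(φ₂):
    (x : ℝ → ℝ) (c : ℤ → ℝ) (hc : Memℓp c 2)
    (hx : ∀ t : ℝ, HasSum (fun n : ℤ => c n * φ₂ (t - n * h)) (x t))
    -- the generalized samples c₁[n] = ⟨x, φ₁(·−nh)⟩: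
    (c₁ : ℤ → ℝ) (hc₁ : ∀ n : ℤ, c₁ n = ∫ t : ℝ, x t * φ₁ (t - n * h)) :
    ∀ t : ℝ,
      HasSum (fun n : ℤ => (∑' m : ℤ, c₁ m * k (n - m)) * φ₂ (t - n * h))
        (x t) := by
  classical
  obtain ⟨A, B, hA, hB, hRB⟩ := hRiesz
  have hRB₂ := fun d => (hRB φ₂ (by simp) d).2
  -- shifted functions are in L²
  have hφ₂s : ∀ n : ℤ, MemLp (fun t => φ₂ (t - n * h)) 2 (volume : Measure ℝ) :=
    fun n => memLp_shift hφ₂ _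
  have hφ₁s : ∀ n : ℤ, MemLp (fun t => φ₁ (t - n * h)) 2 (volume : Measure ℝ) :=
    fun n => memLp_shift hφ₁ _
  -- ℓ² summability of c
  have hc2 : Summable fun n : ℤ => (c n) ^ 2 := by
    have h1 := hc.summable (by norm_num)
    have : (fun n : ℤ => ‖c n‖ ^ (2 : ℝ≥0∞).toReal) = fun n : ℤ => (c n) ^ 2 := by
      ext n
      rw [show (2 : ℝ≥0∞).toReal = ((2 : ℕ) : ℝ) by norm_num, Real.rpow_natCast,
        Real.norm_eq_abs, sq_abs]
    rwa [this] at h1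
  -- ℓ² summability of a
  have ha2 : Summable fun n : ℤ => (a n) ^ 2 := by
    refine Summable.of_nonneg_of_le (fun n => sq_nonneg _)
      (fun n => ?_) (haSummable.mul_left (∑' n, |a n|))
    have h1 : |a n| ≤ ∑' n, |a n| := Summable.le_tsum haSummable n fun _ _ => abs_nonneg _
    calc (a n) ^ 2 = |a n| * |a n| := by rw [← abs_mul, abs_mul_self]; ring
      _ ≤ (∑' n, |a n|) * |a n| := by
          exact mul_le_mul_of_nonneg_right h1 (abs_nonneg _)
  -- shifted a is ℓ²
  have ha2s : ∀ m : ℤ, Summable fun j : ℤ => (a (m - j)) ^ 2 := fun m =>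
    ((Equiv.subLeft m).summable_iff (f := fun n : ℤ => (a n) ^ 2)).mpr ha2
  -- summability of the correlation series
  have hca : ∀ m : ℤ, Summable fun j : ℤ => c j * a (m - j) := fun m =>
    Summable.of_abs (summable_abs_mul hc2 (ha2s m))
  -- partial-sum machinery
  set I : ℕ → Finset ℤ := fun N => Finset.Icc (-(N : ℤ)) (N : ℤ) with hIdef
  have hI : Tendsto I atTop atTop := by
    apply tendsto_atTop_finset_of_monotone
    · intro i j hij
      apply Finset.Icc_subset_Icc <;> omega
    · intro n
      exact ⟨n.natAbs, by rw [hIdef]; rw [Finset.mem_Icc]; omega⟩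
  set sF : Finset ℤ → ℝ → ℝ := fun F t => ∑ n ∈ F, c n * φ₂ (t - n * h) with hsFdef
  have hsF_mem : ∀ F : Finset ℤ, MemLp (sF F) 2 (volume : Measure ℝ) := by
    intro F
    have h0 : MemLp (fun t => ∑ n ∈ F, c n * φ₂ (t - n * h)) 2 (volume : Measure ℝ) :=
      memLp_finset_sum F (fun n _ => (hφ₂s n).const_mul (c n))
    simpa [hsFdef] using h0
  have hIntSq : ∀ F : Finset ℤ, Integrable (fun t => (sF F t) ^ 2) (volume : Measure ℝ) :=
    fun F => (memLp_two_iff_integrable_sq (hsF_mem F).aestronglyMeasurable).mp (hsF_mem F)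
  have htend : ∀ t : ℝ, Tendsto (fun N => sF (I N) t) atTop (𝓝 (x t)) :=
    fun t => (hx t).comp hI
  have hxm : AEStronglyMeasurable x (volume : Measure ℝ) :=
    aestronglyMeasurable_of_tendsto_ae atTop
      (fun N => (hsF_mem (I N)).aestronglyMeasurable) (ae_of_all _ htend)
  set S : ℝ := ∑' n : ℤ, (c n) ^ 2 with hSdef
  have hTnn : ∀ N : ℕ, 0 ≤ S - ∑ n ∈ I N, (c n) ^ 2 := by
    intro N
    have := Summable.sum_le_tsum (I N) (fun n _ => sq_nonneg (c n)) hc2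
    linarith
  -- Fatou bound on the tail
  have hTle : ∀ N : ℕ, ∫⁻ t, ENNReal.ofReal ((x t - sF (I N) t) ^ 2) ≤
      ENNReal.ofReal (B * (S - ∑ n ∈ I N, (c n) ^ 2)) := by
    intro N
    have hmeas : ∀ M : ℕ,
        AEMeasurable (fun t => ENNReal.ofReal ((sF (I M) t - sF (I N) t) ^ 2))
          (volume : Measure ℝ) := fun M =>
      ((((hsF_mem (I M)).aestronglyMeasurable.aemeasurable.sub
        (hsF_mem (I N)).aestronglyMeasurable.aemeasurable).pow_const 2)).ennreal_ofReal
    have hlim : ∀ t : ℝ, Tendsto (fun M => ENNReal.ofReal ((sF (I M) t - sF (I N) t) ^ 2))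
        atTop (𝓝 (ENNReal.ofReal ((x t - sF (I N) t) ^ 2))) := by
      intro t
      exact (ENNReal.continuous_ofReal.tendsto _).comp
        (((htend t).sub tendsto_const_nhds).pow 2)
    have hbdd : ∀ᶠ M in atTop, (∫⁻ t, ENNReal.ofReal ((sF (I M) t - sF (I N) t) ^ 2)) ≤
        ENNReal.ofReal (B * (S - ∑ n ∈ I N, (c n) ^ 2)) := by
      filter_upwards [eventually_ge_atTop N] with M hM
      have hsub : I N ⊆ I M := Finset.Icc_subset_Icc (by omega) (by omega)
      have hdiff : ∀ t : ℝ, sF (I M) t - sF (I N) t = sF (I M \ I N) t := by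
        intro t
        rw [hsFdef]
        simp only
        rw [Finset.sum_sdiff_eq_sub hsub]
      have hint : (∫ t, (sF (I M \ I N) t) ^ 2) ≤ B * (S - ∑ n ∈ I N, (c n) ^ 2) := by
        refine (riesz_upper c hRB₂ (I M \ I N)).trans ?_
        apply mul_le_mul_of_nonneg_left _ hB.le
        rw [Finset.sum_sdiff_eq_sub hsub]
        have := Summable.sum_le_tsum (I M) (fun n _ => sq_nonneg (c n)) hc2
        rw [hSdef]; linarith
      calc (∫⁻ t, ENNReal.ofReal ((sF (I M) t - sF (I N) t) ^ 2))
          = ∫⁻ t, ENNReal.ofReal ((sF (I M \ I N) t) ^ 2) := by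
            congr 1; ext t; rw [hdiff t]
        _ = ENNReal.ofReal (∫ t, (sF (I M \ I N) t) ^ 2) :=
            (ofReal_integral_eq_lintegral_ofReal (hIntSq _)
              (ae_of_all _ fun t => sq_nonneg _)).symm
        _ ≤ ENNReal.ofReal (B * (S - ∑ n ∈ I N, (c n) ^ 2)) := ENNReal.ofReal_le_ofReal hint
    calc (∫⁻ t, ENNReal.ofReal ((x t - sF (I N) t) ^ 2))
        = ∫⁻ t, liminf (fun M => ENNReal.ofReal ((sF (I M) t - sF (I N) t) ^ 2)) atTop := by
          congr 1; ext t; exact ((hlim t).liminf_eq).symm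
      _ ≤ liminf (fun M => ∫⁻ t, ENNReal.ofReal ((sF (I M) t - sF (I N) t) ^ 2)) atTop :=
          lintegral_liminf_le' hmeas
      _ ≤ ENNReal.ofReal (B * (S - ∑ n ∈ I N, (c n) ^ 2)) :=
          liminf_le_of_le (by isBoundedDefault) (fun b hb => by
            obtain ⟨M, hM⟩ := (hb.and hbdd).exists
            exact hM.1.trans hM.2)
  -- the difference x - s_N is in L²
  have hdiffmem : ∀ N : ℕ, MemLp (fun t => x t - sF (I N) t) 2 (volume : Measure ℝ) := by
    intro N
    have hm : AEStronglyMeasurable (fun t => x t - sF (I N) t) (volume : Measure ℝ) :=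
      hxm.sub (hsF_mem (I N)).aestronglyMeasurable
    rw [memLp_two_iff_integrable_sq hm]
    refine ⟨hm.pow (n := 2), ?_⟩
    rw [hasFiniteIntegral_iff_ofReal (ae_of_all _ fun t => sq_nonneg _)]
    exact lt_of_le_of_lt (hTle N) ENNReal.ofReal_lt_top
  have hx2 : MemLp x 2 (volume : Measure ℝ) := by
    have h0 := (hdiffmem 0).add (hsF_mem (I 0))
    have he : (fun t => x t - sF (I 0) t) + sF (I 0) = x := by
      ext t; simp
    rwa [he] at h0
  -- real-valued tail bound
  have hTreal : ∀ N : ℕ, (∫ t, (x t - sF (I N) t) ^ 2) ≤ B * (S - ∑ n ∈ I N, (c n) ^ 2) := by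
    intro N
    have hm : AEStronglyMeasurable (fun t => (x t - sF (I N) t) ^ 2) (volume : Measure ℝ) :=
      (hxm.sub (hsF_mem (I N)).aestronglyMeasurable).pow (n := 2)
    rw [integral_eq_lintegral_of_nonneg_ae (ae_of_all _ fun t => sq_nonneg _) hm]
    calc (∫⁻ t, ENNReal.ofReal ((x t - sF (I N) t) ^ 2)).toReal
        ≤ (ENNReal.ofReal (B * (S - ∑ n ∈ I N, (c n) ^ 2))).toReal :=
          ENNReal.toReal_mono ENNReal.ofReal_ne_top (hTle N)
      _ = B * (S - ∑ n ∈ I N, (c n) ^ 2) :=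
          ENNReal.toReal_ofReal (mul_nonneg hB.le (hTnn N))
  -- tail tends to zero
  have hTtend : Tendsto (fun N => B * (S - ∑ n ∈ I N, (c n) ^ 2)) atTop (𝓝 0) := by
    have h1 : Tendsto (fun N => ∑ n ∈ I N, (c n) ^ 2) atTop (𝓝 S) :=
      hc2.hasSum.comp hI
    have h2 : Tendsto (fun N => S - ∑ n ∈ I N, (c n) ^ 2) atTop (𝓝 0) := by
      have := (tendsto_const_nhds : Tendsto (fun _ : ℕ => S) atTop (𝓝 S)).sub h1
      simpa using this
    simpa using h2.const_mul B
  -- the key identity: c₁ m = Σ_j c_j a_{m-j}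
  have hkey : ∀ m : ℤ, HasSum (fun j : ℤ => c j * a (m - j)) (c₁ m) := by
    intro m
    refine (Summable.hasSum_iff (hca m)).mpr ?_
    have T1 : Tendsto (fun N => ∑ j ∈ I N, c j * a (m - j)) atTop
        (𝓝 (∑' j : ℤ, c j * a (m - j))) := (hca m).hasSum.comp hI
    have hstepA : ∀ N : ℕ, (∫ t, sF (I N) t * φ₁ (t - m * h)) = ∑ j ∈ I N, c j * a (m - j) := by
      intro N
      have he : (fun t => sF (I N) t * φ₁ (t - m * h)) =
          fun t => ∑ j ∈ I N, c j * (φ₂ (t - j * h) * φ₁ (t - m * h)) := by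
        ext t
        rw [hsFdef]
        simp only
        rw [Finset.sum_mul]
        exact Finset.sum_congr rfl fun j _ => by ring
      rw [he, integral_finset_sum _ (fun j _ =>
        ((integrable_mul_of_memLp2 (hφ₂s j) (hφ₁s m)).const_mul (c j)))]
      refine Finset.sum_congr rfl fun j _ => ?_
      rw [integral_const_mul, cross_integral h a ha j m]
    have hint_x : Integrable (fun t => x t * φ₁ (t - m * h)) (volume : Measure ℝ) :=
      integrable_mul_of_memLp2 hx2 (hφ₁s m)
    have hdist : ∀ N : ℕ, |(∫ t, sF (I N) t * φ₁ (t - m * h)) - ∫ t, x t * φ₁ (t - m * h)| ≤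
        Real.sqrt (B * (S - ∑ n ∈ I N, (c n) ^ 2)) * Real.sqrt (∫ t, (φ₁ (t - m * h)) ^ 2) := by
      intro N
      have hint_s : Integrable (fun t => sF (I N) t * φ₁ (t - m * h)) (volume : Measure ℝ) :=
        integrable_mul_of_memLp2 (hsF_mem (I N)) (hφ₁s m)
      have hsub : (∫ t, sF (I N) t * φ₁ (t - m * h)) - (∫ t, x t * φ₁ (t - m * h)) =
          ∫ t, (sF (I N) t - x t) * φ₁ (t - m * h) := by
        rw [← integral_sub hint_s hint_x]
        congr 1; ext t; ring
      rw [hsub]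
      have hmem : MemLp (fun t => sF (I N) t - x t) 2 (volume : Measure ℝ) := by
        have h0 := (hdiffmem N).neg
        have he : (-(fun t : ℝ => x t - sF (I N) t) : ℝ → ℝ) = fun t => sF (I N) t - x t := by
          ext t; simp only [Pi.neg_apply]; ring
        rwa [he] at h0
      refine (cauchy_schwarz_integral hmem (hφ₁s m)).trans ?_
      apply mul_le_mul_of_nonneg_right _ (Real.sqrt_nonneg _)
      apply Real.sqrt_le_sqrt
      have he : (fun t => (sF (I N) t - x t) ^ 2) = fun t => (x t - sF (I N) t) ^ 2 := by
        ext t; ring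
      calc (∫ t, (sF (I N) t - x t) ^ 2) = ∫ t, (x t - sF (I N) t) ^ 2 := by rw [he]
        _ ≤ B * (S - ∑ n ∈ I N, (c n) ^ 2) := hTreal N
    have hg0 : Tendsto (fun N => Real.sqrt (B * (S - ∑ n ∈ I N, (c n) ^ 2)) *
        Real.sqrt (∫ t, (φ₁ (t - m * h)) ^ 2)) atTop (𝓝 0) := by
      have h1 : Tendsto (fun N => Real.sqrt (B * (S - ∑ n ∈ I N, (c n) ^ 2))) atTop
          (𝓝 0) := by
        have := (Real.continuous_sqrt.tendsto 0).comp hTtend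
        simpa [Function.comp_def] using this
      simpa using h1.mul_const (Real.sqrt (∫ t, (φ₁ (t - m * h)) ^ 2))
    have T2 : Tendsto (fun N => ∫ t, sF (I N) t * φ₁ (t - m * h)) atTop
        (𝓝 (∫ t, x t * φ₁ (t - m * h))) := by
      rw [tendsto_iff_dist_tendsto_zero]
      refine squeeze_zero (fun N => dist_nonneg) (fun N => ?_) hg0
      rw [Real.dist_eq]
      exact hdist N
    have T2' : Tendsto (fun N => ∑ j ∈ I N, c j * a (m - j)) atTop
        (𝓝 (∫ t, x t * φ₁ (t - m * h))) := by
      refine T2.congr fun N => hstepA N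
    rw [hc₁ m]
    exact tendsto_nhds_unique T1 T2'
  -- the reconstruction coefficients collapse: (c₁ * k)[n] = c[n]
  have hfinal : ∀ n : ℤ, (∑' m : ℤ, c₁ m * k (n - m)) = c n := by
    intro n
    have hks : Summable fun m : ℤ => |k (n - m)| :=
      ((Equiv.subLeft n).summable_iff (f := fun m : ℤ => |k m|)).mpr hkSummable
    have Sa : Summable fun j : ℤ => (a j) ^ 2 := ha2
    set D : ℝ := (∑' j : ℤ, (c j) ^ 2) + (∑' j : ℤ, (a j) ^ 2) with hD
    have htsum_bound : ∀ m : ℤ, (∑' j : ℤ, |c j * a (m - j)|) ≤ D := by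
      intro m
      have hb : ∀ j : ℤ, |c j * a (m - j)| ≤ (c j) ^ 2 + (a (m - j)) ^ 2 := by
        intro j
        rw [abs_mul]
        nlinarith [sq_abs (c j), sq_abs (a (m - j)), sq_nonneg (|c j| - |a (m - j)|),
          abs_nonneg (c j), abs_nonneg (a (m - j))]
      have hsum2 : Summable fun j : ℤ => (c j) ^ 2 + (a (m - j)) ^ 2 := hc2.add (ha2s m)
      refine (Summable.tsum_le_tsum hb (summable_abs_mul hc2 (ha2s m)) hsum2).trans ?_
      rw [Summable.tsum_add hc2 (ha2s m), hD]
      have : (∑' j : ℤ, (a (m - j)) ^ 2) = ∑' j : ℤ, (a j) ^ 2 :=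
        (Equiv.subLeft m).tsum_eq (f := fun j : ℤ => (a j) ^ 2)
      rw [this]
    have hFabs : Summable fun p : ℤ × ℤ => |c p.2 * a (p.1 - p.2) * k (n - p.1)| := by
      rw [summable_prod_of_nonneg (fun p => abs_nonneg _)]
      constructor
      · intro m
        have h0 : Summable fun j : ℤ => |c j * a (m - j)| * |k (n - m)| :=
          (summable_abs_mul hc2 (ha2s m)).mul_right _
        refine h0.congr fun j => ?_
        rw [← abs_mul]
      · refine Summable.of_nonneg_of_le (fun m => tsum_nonneg fun j => abs_nonneg _)
          (fun m => ?_) (hks.mul_left D)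
        have he : (fun j : ℤ => |c j * a (m - j) * k (n - m)|) =
            fun j : ℤ => |c j * a (m - j)| * |k (n - m)| := by
          ext j; rw [abs_mul]
        rw [he, tsum_mul_right]
        apply mul_le_mul_of_nonneg_right (htsum_bound m) (abs_nonneg _)
    have hF : Summable (Function.uncurry fun (m j : ℤ) => c j * a (m - j) * k (n - m)) := by
      have h0 : Summable fun p : ℤ × ℤ => c p.2 * a (p.1 - p.2) * k (n - p.1) :=
        Summable.of_abs hFabs
      exact h0
    have hdelta : ∀ j : ℤ, HasSum (fun m : ℤ => a (m - j) * k (n - m))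
        (if n - j = 0 then 1 else 0) := by
      intro j
      have h0 := hk (n - j)
      rw [← (Equiv.subLeft n).hasSum_iff (f := fun m : ℤ => a (m - j) * k (n - m))]
      have he : ((fun m : ℤ => a (m - j) * k (n - m)) ∘ (Equiv.subLeft n)) =
          fun m' : ℤ => k m' * a (n - j - m') := by
        ext m'
        simp only [Function.comp_apply, Equiv.subLeft_apply]
        rw [sub_sub_cancel, sub_right_comm, mul_comm]
      rw [he]
      exact h0
    have hrow : ∀ m : ℤ, Summable fun j : ℤ => c j * a (m - j) * k (n - m) := by
      intro m
      refine Summable.of_abs ?_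
      have h0 : Summable fun j : ℤ => |c j * a (m - j)| * |k (n - m)| :=
        (summable_abs_mul hc2 (ha2s m)).mul_right _
      refine h0.congr fun j => ?_
      rw [← abs_mul]
    calc (∑' m : ℤ, c₁ m * k (n - m))
        = ∑' m : ℤ, (∑' j : ℤ, c j * a (m - j)) * k (n - m) := by
          refine tsum_congr fun m => ?_
          rw [(hkey m).tsum_eq]
      _ = ∑' m : ℤ, ∑' j : ℤ, c j * a (m - j) * k (n - m) := by
          refine tsum_congr fun m => ?_
          rw [← tsum_mul_right]
      _ = ∑' j : ℤ, ∑' m : ℤ, c j * a (m - j) * k (n - m) := (Summable.tsum_comm hF).symm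
      _ = ∑' j : ℤ, c j * (if n - j = 0 then 1 else 0) := by
          refine tsum_congr fun j => ?_
          have h1 : HasSum (fun m : ℤ => c j * (a (m - j) * k (n - m)))
              (c j * (if n - j = 0 then 1 else 0)) := (hdelta j).mul_left (c j)
          have h2 : (fun m : ℤ => c j * (a (m - j) * k (n - m))) =
              fun m : ℤ => c j * a (m - j) * k (n - m) := by
            ext m; ring
          rw [h2] at h1
          exact h1.tsum_eq
      _ = c n := by
          rw [tsum_eq_single n (fun j hj => by
            rw [if_neg (by omega), mul_zero])]
          rw [if_pos (by ring), mul_one]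
  intro t
  have hxt := hx t
  simp only [hfinal]
  exact hxt
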